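/- (Right-handed topological Ackermann lemma.) Let (X, K, R) be a generalized modal space and let p be a fixed propositional variable. Let θ be a formula of Form containing no propositional variables (built from nominals and ⊤ using ∧, ∨, □, ◆). Suppose given finitely many pairs (η_1, ι_1), …, (η_m, ι_m), where each pair is either of the form (α, q) with α ∈ Form and q a propositional variable distinct from p, or of the form (p, {n}ᶜ) for some point n ∈ X. Let V be a valuation assigning to every propositional variable an element of D_K(X) and to every nominal a singleton subset of X, where by convention V({n}ᶜ) := {n}ᶜ and V(q) is the D_K(X)-value of q. Then the following are equivalent: (1) V(η_i[θ/p]) ⊆ V(ι_i) for all 1 ≤ i ≤ m, where η_i[θ/p] denotes the result of substituting θ for every occurrence of p in η_i; (2) there exists Z ∈ D_K(X) with V(θ) ⊆ Z such that, for the valuation V' agreeing with V except that V'(p) = Z, one has V'(η_i) ⊆ V'(ι_i) for all 1 ≤ i ≤ m. -/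

import Mathlib

open Set TopologicalSpace

/-- A family of sets is downward-directed if any two members contain a common member. -/
def DirDown {X : Type*} (F : Set (Set X)) : Prop :=
  ∀ U ∈ F, ∀ V ∈ F, ∃ W ∈ F, W ⊆ U ∩ V

/-- A family of sets is upward-directed if any two members are contained in a common member. -/
def DirUp {X : Type*} (F : Set (Set X)) : Prop :=
  ∀ U ∈ F, ∀ V ∈ F, ∃ W ∈ F, U ∪ V ⊆ W

/-- `(X, K)` is a generalized Stone space. -/
structure IsGenStone {X : Type*} [TopologicalSpace X] (K : Set (Set X)) : Prop where
  sep : ∀ x y : X, x ≠ y → ∃ U ∈ K, x ∈ U ∧ y ∉ U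
  basis : IsTopologicalBasis K
  compact : ∀ U ∈ K, IsCompact U
  diff_mem : ∀ A ∈ K, ∀ B ∈ K, A ∩ Bᶜ ∈ K
  union_mem : ∀ A ∈ K, ∀ B ∈ K, A ∪ B ∈ K
  dir_inter : ∀ Y : Set X, IsClosed Y → ∀ I ⊆ K, I.Nonempty → DirDown I →
    (∀ U ∈ I, (Y ∩ U).Nonempty) → (Y ∩ ⋂₀ I).Nonempty

/-- The dual family `D_K(X)` of sets whose complement lies in `K`. -/
def DK {X : Type*} (K : Set (Set X)) : Set (Set X) := {U | Uᶜ ∈ K}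

/-- `(X, K, R)` is a generalized modal space. -/
structure IsGenModal {X : Type*} [TopologicalSpace X] (K : Set (Set X))
    (R : X → X → Prop) : Prop where
  toIsGenStone : IsGenStone K
  closed_succ : ∀ x : X, IsClosed {y | R x y}
  box_mem : ∀ U ∈ DK K, {x : X | ∀ y, R x y → y ∈ U} ∈ DK K

/-- Modal formulas built from propositional variables (`P`), nominals (`N`) and `⊤`,
using `∧`, `∨`, `□` and the backward diamond `◆`. -/
inductive Form (P N : Type*) : Type _ where
  | prop : P → Form P N
  | nom : N → Form P N
  | top : Form P N
  | and : Form P N → Form P N → Form P N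
  | or : Form P N → Form P N → Form P N
  | box : Form P N → Form P N
  | bdia : Form P N → Form P N

/-- The truth set of a formula in a model `(X, R, V)`, where `Vp` interprets propositional
variables and `Vn` interprets nominals. -/
def tset {X P N : Type*} (R : X → X → Prop) (Vp : P → Set X) (Vn : N → Set X) :
    Form P N → Set X
  | Form.prop p => Vp p
  | Form.nom n => Vn n
  | Form.top => Set.univ
  | Form.and a b => tset R Vp Vn a ∩ tset R Vp Vn b
  | Form.or a b => tset R Vp Vn a ∪ tset R Vp Vn b
  | Form.box a => {x | ∀ y, R x y → y ∈ tset R Vp Vn a}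
  | Form.bdia a => {x | ∃ y, R y x ∧ y ∈ tset R Vp Vn a}

/-- A formula contains no propositional variables (it is built from nominals and `⊤`
using `∧`, `∨`, `□`, `◆`). -/
def NoProp {P N : Type*} : Form P N → Prop
  | Form.prop _ => False
  | Form.nom _ => True
  | Form.top => True
  | Form.and a b => NoProp a ∧ NoProp b
  | Form.or a b => NoProp a ∧ NoProp b
  | Form.box a => NoProp a
  | Form.bdia a => NoProp a

/-- Substitution of the formula `θ` for every occurrence of the propositional variable `p`. -/
def subst {P N : Type*} [DecidableEq P] (p : P) (θ : Form P N) : Form P N → Form P N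
  | Form.prop q => if q = p then θ else Form.prop q
  | Form.nom n => Form.nom n
  | Form.top => Form.top
  | Form.and a b => Form.and (subst p θ a) (subst p θ b)
  | Form.or a b => Form.or (subst p θ a) (subst p θ b)
  | Form.box a => Form.box (subst p θ a)
  | Form.bdia a => Form.bdia (subst p θ a)

section AckAux

variable {X : Type*} [TopologicalSpace X] {K : Set (Set X)} {R : X → X → Prop}

lemma K_open (hK : IsGenStone K) {A : Set X} (hA : A ∈ K) : IsOpen A :=
  hK.basis.isOpen hA

lemma K_empty (hK : IsGenStone K) {A : Set X} (hA : A ∈ K) : (∅ : Set X) ∈ K := by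
  have h := hK.diff_mem A hA A hA
  simpa using h

lemma exists_mem_K (hK : IsGenStone K) (x : X) : ∃ A ∈ K, x ∈ A := by
  have hx : x ∈ ⋃₀ K := by rw [hK.basis.sUnion_eq]; trivial
  obtain ⟨A, hA, hxA⟩ := hx
  exact ⟨A, hA, hxA⟩

lemma K_sUnion (hK : IsGenStone K) (h0 : (∅ : Set X) ∈ K) {S : Set (Set X)}
    (hfin : S.Finite) : S ⊆ K → ⋃₀ S ∈ K := by
  refine Set.Finite.induction_on (motive := fun S _ => S ⊆ K → ⋃₀ S ∈ K) S hfin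
    (fun _ => by simpa using h0) ?_
  intro A S' _ _ ih hsub
  rw [Set.sUnion_insert]
  exact hK.union_mem _ (hsub (Set.mem_insert _ _)) _
    (ih fun B hB => hsub (Set.mem_insert_of_mem _ hB))

lemma K_closed (hK : IsGenStone K) {B : Set X} (hB : B ∈ K) : IsClosed B := by
  rw [← isOpen_compl_iff, isOpen_iff_forall_mem_open]
  intro x hx
  have hcov : B ⊆ ⋃ U ∈ {U | U ∈ K ∧ x ∉ U}, U := by
    intro y hy
    obtain ⟨U, hU, hyU, hxU⟩ := hK.sep y x (fun h => hx (h ▸ hy))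
    exact Set.mem_biUnion ⟨hU, hxU⟩ hyU
  obtain ⟨S, hSsub, hSfin, hBS⟩ := (hK.compact B hB).elim_finite_subcover_image
      (fun U hU => K_open hK hU.1) hcov
  have hSK : ⋃₀ S ∈ K := K_sUnion hK (K_empty hK hB) hSfin (fun U hU => (hSsub hU).1)
  obtain ⟨A₀, hA₀, hxA₀⟩ := exists_mem_K hK x
  refine ⟨A₀ ∩ (⋃₀ S)ᶜ, ?_, K_open hK (hK.diff_mem _ hA₀ _ hSK), hxA₀, ?_⟩
  · intro z hz hzB
    have : z ∈ ⋃ U ∈ S, U := hBS hzB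
    rw [← Set.sUnion_eq_biUnion] at this
    exact hz.2 this
  · intro hxS
    obtain ⟨U, hU, hxU⟩ := hxS
    exact (hSsub hU).2 hxU

lemma DK_closed (hK : IsGenStone K) {Z : Set X} (hZ : Z ∈ DK K) : IsClosed Z :=
  isOpen_compl_iff.mp (K_open hK hZ)

lemma DK_open (hK : IsGenStone K) {Z : Set X} (hZ : Z ∈ DK K) : IsOpen Z := by
  have := (K_closed hK hZ).isOpen_compl
  rwa [compl_compl] at this

lemma DK_inter (hK : IsGenStone K) {Z W : Set X} (hZ : Z ∈ DK K) (hW : W ∈ DK K) :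
    Z ∩ W ∈ DK K := by
  show (Z ∩ W)ᶜ ∈ K
  rw [Set.compl_inter]
  exact hK.union_mem _ hZ _ hW

lemma DK_union (hK : IsGenStone K) {Z W : Set X} (hZ : Z ∈ DK K) (hW : W ∈ DK K) :
    Z ∪ W ∈ DK K := by
  show (Z ∪ W)ᶜ ∈ K
  have h1 : Zᶜ ∩ (Wᶜ)ᶜ ∈ K := hK.diff_mem _ hZ _ hW
  have h2 : Zᶜ ∩ (Zᶜ ∩ (Wᶜ)ᶜ)ᶜ ∈ K := hK.diff_mem _ hZ _ h1
  have he : (Z ∪ W)ᶜ = Zᶜ ∩ (Zᶜ ∩ (Wᶜ)ᶜ)ᶜ := by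
    ext y; simp only [Set.mem_compl_iff, Set.mem_union, Set.mem_inter_iff, not_or]; tauto
  rw [he]; exact h2

lemma DK_univ (hK : IsGenStone K) (h0 : (∅ : Set X) ∈ K) : (Set.univ : Set X) ∈ DK K := by
  show (Set.univ : Set X)ᶜ ∈ K
  rwa [Set.compl_univ]

lemma compl_mem_DK {A : Set X} (hA : A ∈ K) : Aᶜ ∈ DK K := by
  show Aᶜᶜ ∈ K
  rwa [compl_compl]


/-- `C` is an intersection of `DK`-sets (pointwise form). -/
def SatK (K : Set (Set X)) (C : Set X) : Prop :=
  ∀ x ∉ C, ∃ Z ∈ DK K, C ⊆ Z ∧ x ∉ Z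

lemma DK_sat {Z : Set X} (hZ : Z ∈ DK K) : SatK K Z :=
  fun _ hx => ⟨Z, hZ, subset_rfl, hx⟩

lemma SatK.closed (hK : IsGenStone K) {C : Set X} (h : SatK K C) : IsClosed C := by
  rw [← isOpen_compl_iff, isOpen_iff_forall_mem_open]
  intro x hx
  obtain ⟨Z, hZ, hCZ, hxZ⟩ := h x hx
  exact ⟨Zᶜ, Set.compl_subset_compl.mpr hCZ, K_open hK hZ, hxZ⟩

lemma sat_singleton (hK : IsGenStone K) (y : X) : SatK K ({y} : Set X) := by
  intro x hx
  obtain ⟨A, hA, hxA, hyA⟩ := hK.sep x y (by simpa using hx)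
  refine ⟨Aᶜ, compl_mem_DK hA, ?_, fun h => h hxA⟩
  intro z hz
  rw [Set.mem_singleton_iff] at hz
  subst hz; exact hyA

lemma sat_univ : SatK K (Set.univ : Set X) :=
  fun _ hx => absurd trivial hx

lemma sat_inter {A B : Set X} (hA : SatK K A) (hB : SatK K B) : SatK K (A ∩ B) := by
  intro x hx
  by_cases hxA : x ∈ A
  · obtain ⟨Z, hZ, hsub, hxZ⟩ := hB x (fun h => hx ⟨hxA, h⟩)
    exact ⟨Z, hZ, fun z hz => hsub hz.2, hxZ⟩
  · obtain ⟨Z, hZ, hsub, hxZ⟩ := hA x hxA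
    exact ⟨Z, hZ, fun z hz => hsub hz.1, hxZ⟩

lemma sat_union (hK : IsGenStone K) {A B : Set X} (hA : SatK K A) (hB : SatK K B) :
    SatK K (A ∪ B) := by
  intro x hx
  obtain ⟨Z1, hZ1, hs1, hx1⟩ := hA x (fun h => hx (Or.inl h))
  obtain ⟨Z2, hZ2, hs2, hx2⟩ := hB x (fun h => hx (Or.inr h))
  exact ⟨Z1 ∪ Z2, DK_union hK hZ1 hZ2, Set.union_subset_union hs1 hs2,
    fun h => h.elim hx1 hx2⟩

lemma sat_box (hM : IsGenModal K R) {A : Set X} (hA : SatK K A) :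
    SatK K {x | ∀ y, R x y → y ∈ A} := by
  intro x hx
  simp only [Set.mem_setOf_eq, not_forall] at hx
  obtain ⟨y, hxy, hyA⟩ := hx
  obtain ⟨Z, hZ, hsub, hyZ⟩ := hA y hyA
  refine ⟨{x | ∀ y, R x y → y ∈ Z}, hM.box_mem _ hZ, ?_, ?_⟩
  · intro z hz w hw; exact hsub (hz w hw)
  · intro h; exact hyZ (h y hxy)

/-- If a closed set meets every basic neighbourhood of `x`, then `x` belongs to it. -/
lemma mem_of_meets_all_nbhds (hK : IsGenStone K) {Y : Set X} (hY : IsClosed Y) (x : X)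
    (h : ∀ A ∈ K, x ∈ A → (Y ∩ A).Nonempty) : x ∈ Y := by
  obtain ⟨A₀, hA₀, hxA₀⟩ := exists_mem_K hK x
  haveI : Nonempty {A : Set X // A ∈ K ∧ x ∈ A} := ⟨⟨A₀, hA₀, hxA₀⟩⟩
  have hne := IsCompact.nonempty_iInter_of_directed_nonempty_isCompact_isClosed
    (fun A : {A : Set X // A ∈ K ∧ x ∈ A} => Y ∩ A.1) ?_ ?_ ?_ ?_
  · obtain ⟨z, hz⟩ := hne
    have hz' : ∀ A : {A : Set X // A ∈ K ∧ x ∈ A}, z ∈ Y ∩ A.1 := Set.mem_iInter.mp hz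
    have hzx : z = x := by
      by_contra hne'
      obtain ⟨U, hU, hxU, hzU⟩ := hK.sep x z (fun h' => hne' h'.symm)
      exact hzU (hz' ⟨U, hU, hxU⟩).2
    rw [← hzx]
    exact (hz' ⟨A₀, hA₀, hxA₀⟩).1
  · rintro ⟨A, hA, hxA⟩ ⟨B, hB, hxB⟩
    obtain ⟨C, hC, hxC, hCsub⟩ := hK.basis.exists_subset_of_mem_open
      (Set.mem_inter hxA hxB) ((K_open hK hA).inter (K_open hK hB))
    exact ⟨⟨C, hC, hxC⟩, fun z hz => ⟨hz.1, (hCsub hz.2).1⟩,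
      fun z hz => ⟨hz.1, (hCsub hz.2).2⟩⟩
  · exact fun A => h A.1 A.2.1 A.2.2
  · exact fun A => IsCompact.of_isClosed_subset (hK.compact _ A.2.1)
      (hY.inter (K_closed hK A.2.1)) Set.inter_subset_right
  · exact fun A => hY.inter (K_closed hK A.2.1)

lemma bdiaK_mem (hM : IsGenModal K R) {A : Set X} (hA : A ∈ K) :
    {y | ∃ w, R y w ∧ w ∈ A} ∈ K := by
  have hbox := hM.box_mem _ (compl_mem_DK hA)
  have : {y | ∃ w, R y w ∧ w ∈ A} = {y | ∀ w, R y w → w ∈ Aᶜ}ᶜ := by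
    ext y
    simp only [Set.mem_setOf_eq, Set.mem_compl_iff, not_forall]
    constructor
    · rintro ⟨w, hw, hwA⟩; exact ⟨w, hw, fun h => h hwA⟩
    · rintro ⟨w, hw, hwA⟩; exact ⟨w, hw, not_not.mp hwA⟩
  rw [this]
  exact hbox

lemma sat_bdia (hM : IsGenModal K R) {A : Set X} (hA : IsClosed A) :
    SatK K {x | ∃ y, R y x ∧ y ∈ A} := by
  have hK := hM.toIsGenStone
  intro x hx
  simp only [Set.mem_setOf_eq, not_exists, not_and] at hx
  -- Claim: there is a basic nbhd A' of x with A ∩ ◇A' = ∅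
  have hclaim : ∃ A' ∈ K, x ∈ A' ∧ A ∩ {y | ∃ w, R y w ∧ w ∈ A'} = ∅ := by
    by_contra hcon
    push_neg at hcon
    obtain ⟨A₀, hA₀, hxA₀⟩ := exists_mem_K hK x
    haveI : Nonempty {A' : Set X // A' ∈ K ∧ x ∈ A'} := ⟨⟨A₀, hA₀, hxA₀⟩⟩
    have hne := IsCompact.nonempty_iInter_of_directed_nonempty_isCompact_isClosed
      (fun A' : {A' : Set X // A' ∈ K ∧ x ∈ A'} =>
        A ∩ {y | ∃ w, R y w ∧ w ∈ A'.1}) ?_ ?_ ?_ ?_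
    · obtain ⟨y, hy⟩ := hne
      have hy' : ∀ A' : {A' : Set X // A' ∈ K ∧ x ∈ A'},
          y ∈ A ∩ {y | ∃ w, R y w ∧ w ∈ A'.1} := Set.mem_iInter.mp hy
      have hyA : y ∈ A := (hy' ⟨A₀, hA₀, hxA₀⟩).1
      have hxR : x ∈ {w | R y w} := by
        apply mem_of_meets_all_nbhds hK (hM.closed_succ y)
        intro B hB hxB
        obtain ⟨w, hw, hwB⟩ := (hy' ⟨B, hB, hxB⟩).2
        exact ⟨w, hw, hwB⟩
      exact hx y hxR hyA
    · rintro ⟨A1, hA1, hxA1⟩ ⟨A2, hA2, hxA2⟩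
      obtain ⟨A3, hA3, hxA3, hsub⟩ := hK.basis.exists_subset_of_mem_open
        (Set.mem_inter hxA1 hxA2) ((K_open hK hA1).inter (K_open hK hA2))
      refine ⟨⟨A3, hA3, hxA3⟩, ?_, ?_⟩
      · rintro z ⟨hzA, w, hw, hwA3⟩; exact ⟨hzA, w, hw, (hsub hwA3).1⟩
      · rintro z ⟨hzA, w, hw, hwA3⟩; exact ⟨hzA, w, hw, (hsub hwA3).2⟩
    · exact fun A' => hcon A'.1 A'.2.1 A'.2.2
    · exact fun A' => IsCompact.of_isClosed_subset
        (hK.compact _ (bdiaK_mem hM A'.2.1))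
        (hA.inter (K_closed hK (bdiaK_mem hM A'.2.1))) Set.inter_subset_right
    · exact fun A' => hA.inter (K_closed hK (bdiaK_mem hM A'.2.1))
  obtain ⟨A', hA', hxA', hdisj⟩ := hclaim
  refine ⟨A'ᶜ, compl_mem_DK hA', ?_, fun h => h hxA'⟩
  rintro z ⟨y, hyz, hyA⟩ hzA'
  have : y ∈ A ∩ {y | ∃ w, R y w ∧ w ∈ A'} := ⟨hyA, z, hyz, hzA'⟩
  rw [hdisj] at this
  exact this

lemma pred_closed (hM : IsGenModal K R) (x : X) : IsClosed {y | R y x} := by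
  have hK := hM.toIsGenStone
  rw [← isOpen_compl_iff, isOpen_iff_forall_mem_open]
  intro y hy
  have hx : x ∈ {z | R y z}ᶜ := hy
  obtain ⟨A, hA, hxA, hAsub⟩ := hK.basis.exists_subset_of_mem_open hx
    (hM.closed_succ y).isOpen_compl
  refine ⟨{z | ∀ w, R z w → w ∈ Aᶜ}, ?_, ?_, ?_⟩
  · intro z hz hRzx
    exact (hz x hRzx) hxA
  · exact DK_open hK (hM.box_mem _ (compl_mem_DK hA))
  · intro w hyw hwA
    exact (hAsub hwA) hyw

lemma pred_compact (hM : IsGenModal K R) (x : X) : IsCompact {y | R y x} := by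
  have hK := hM.toIsGenStone
  obtain ⟨A, hA, hxA⟩ := exists_mem_K hK x
  have hbox := hM.box_mem _ (compl_mem_DK hA)
  refine IsCompact.of_isClosed_subset (hK.compact _ hbox) (pred_closed hM x) ?_
  intro y hy hall
  exact (hall x hy) hxA

end AckAux

section AckAux2

variable {X P N : Type*} [TopologicalSpace X] {K : Set (Set X)} {R : X → X → Prop}

lemma tset_mono (R : X → X → Prop) {Vp Vp' : P → Set X} (Vn : N → Set X)
    (h : ∀ q, Vp q ⊆ Vp' q) (a : Form P N) : tset R Vp Vn a ⊆ tset R Vp' Vn a := by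
  induction a with
  | prop q => exact h q
  | nom n => exact subset_rfl
  | top => exact subset_rfl
  | and a b iha ihb => exact fun x hx => ⟨iha hx.1, ihb hx.2⟩
  | or a b iha ihb => exact fun x hx => hx.imp (fun h' => iha h') (fun h' => ihb h')
  | box a ih => exact fun x hx y hy => ih (hx y hy)
  | bdia a ih => rintro x ⟨y, hy, hya⟩; exact ⟨y, hy, ih hya⟩

lemma update_mono [DecidableEq P] (Vp : P → Set X) (p : P) {Z Z' : Set X}
    (h : Z ⊆ Z') (q : P) : Function.update Vp p Z q ⊆ Function.update Vp p Z' q := by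
  rcases eq_or_ne q p with rfl | hne
  · simpa using h
  · simp [Function.update_of_ne hne]

lemma tset_subst [DecidableEq P] (R : X → X → Prop) (Vp : P → Set X) (Vn : N → Set X)
    (p : P) (θ : Form P N) (a : Form P N) :
    tset R Vp Vn (subst p θ a) =
      tset R (Function.update Vp p (tset R Vp Vn θ)) Vn a := by
  induction a with
  | prop q =>
      by_cases h : q = p
      · subst h; simp [subst, tset]
      · simp [subst, h, tset, Function.update_of_ne h]
  | nom n => rfl
  | top => rfl
  | and a b iha ihb => simp only [subst, tset, iha, ihb]
  | or a b iha ihb => simp only [subst, tset, iha, ihb]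
  | box a ih => simp only [subst, tset, ih]
  | bdia a ih => simp only [subst, tset, ih]

lemma tset_satK (hM : IsGenModal K R) (Vp : P → Set X) (Vn : N → Set X)
    (hVp : ∀ q, SatK K (Vp q)) (hVn : ∀ n, ∃ x : X, Vn n = {x}) (a : Form P N) :
    SatK K (tset R Vp Vn a) := by
  induction a with
  | prop q => exact hVp q
  | nom n =>
      obtain ⟨y, hy⟩ := hVn n
      show SatK K (Vn n)
      rw [hy]; exact sat_singleton hM.toIsGenStone y
  | top => exact sat_univ
  | and a b iha ihb => exact sat_inter iha ihb
  | or a b iha ihb => exact sat_union hM.toIsGenStone iha ihb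
  | box a ih => exact sat_box hM ih
  | bdia a ih => exact sat_bdia hM (ih.closed hM.toIsGenStone)

lemma sat_update [DecidableEq P] (Vp : P → Set X) (p : P) {Z : Set X}
    (hVp : ∀ q, SatK K (Vp q)) (hZ : Z ∈ DK K) (q : P) :
    SatK K (Function.update Vp p Z q) := by
  rcases eq_or_ne q p with rfl | hne
  · simpa using DK_sat hZ
  · simpa [Function.update_of_ne hne] using hVp q

/-- Esakia-type lemma: truth sets commute with downward-directed intersections
of `DK`-sets substituted for `p`. -/
lemma esakia [DecidableEq P] (hM : IsGenModal K R) (Vp : P → Set X) (Vn : N → Set X)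
    (hVp : ∀ q, SatK K (Vp q)) (hVn : ∀ n, ∃ x : X, Vn n = {x}) (p : P)
    (F : Set (Set X)) (hF : F ⊆ DK K) (hFne : F.Nonempty) (hdir : DirDown F)
    (a : Form P N) (x : X)
    (hx : ∀ Z ∈ F, x ∈ tset R (Function.update Vp p Z) Vn a) :
    x ∈ tset R (Function.update Vp p (⋂₀ F)) Vn a := by
  induction a generalizing x with
  | prop q =>
      rcases eq_or_ne q p with rfl | hne
      · show x ∈ Function.update Vp q (⋂₀ F) q
        rw [Function.update_self]
        refine Set.mem_sInter.mpr fun Z hZ => ?_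
        have := hx Z hZ
        rwa [show tset R (Function.update Vp q Z) Vn (Form.prop q)
            = Function.update Vp q Z q from rfl, Function.update_self] at this
      · obtain ⟨Z, hZ⟩ := hFne
        have := hx Z hZ
        show x ∈ Function.update Vp p (⋂₀ F) q
        rw [Function.update_of_ne hne]
        rwa [show tset R (Function.update Vp p Z) Vn (Form.prop q)
            = Function.update Vp p Z q from rfl, Function.update_of_ne hne] at this
  | nom n =>
      obtain ⟨Z, hZ⟩ := hFne
      exact hx Z hZ
  | top => trivial
  | and a b iha ihb =>
      exact ⟨iha x (fun Z hZ => (hx Z hZ).1), ihb x (fun Z hZ => (hx Z hZ).2)⟩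
  | or a b iha ihb =>
      by_cases hall : ∀ Z ∈ F, x ∈ tset R (Function.update Vp p Z) Vn a
      · exact Or.inl (iha x hall)
      · push_neg at hall
        obtain ⟨Z1, hZ1, hxZ1⟩ := hall
        refine Or.inr (ihb x fun Z hZ => ?_)
        obtain ⟨Z3, hZ3, hsub⟩ := hdir Z1 hZ1 Z hZ
        rcases hx Z3 hZ3 with h3 | h3
        · exact absurd (tset_mono R Vn
            (update_mono Vp p (fun z hz => (hsub hz).1)) a h3) hxZ1
        · exact tset_mono R Vn (update_mono Vp p (fun z hz => (hsub hz).2)) b h3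
  | box a ih =>
      intro y hy
      exact ih y (fun Z hZ => hx Z hZ y hy)
  | bdia a ih =>
      have hK := hM.toIsGenStone
      haveI : Nonempty F := ⟨⟨hFne.choose, hFne.choose_spec⟩⟩
      have hclosed : ∀ Z : F, IsClosed (tset R (Function.update Vp p Z.1) Vn a) :=
        fun Z => (tset_satK hM _ Vn (sat_update Vp p hVp (hF Z.2)) hVn a).closed hK
      have hne := IsCompact.nonempty_iInter_of_directed_nonempty_isCompact_isClosed
        (fun Z : F => {y | R y x} ∩ tset R (Function.update Vp p Z.1) Vn a) ?_ ?_ ?_ ?_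
      · obtain ⟨y, hy⟩ := hne
        have hy' : ∀ Z : F, y ∈ {y | R y x} ∩ tset R (Function.update Vp p Z.1) Vn a :=
          Set.mem_iInter.mp hy
        refine ⟨y, (hy' ⟨hFne.choose, hFne.choose_spec⟩).1, ?_⟩
        exact ih y (fun Z hZ => (hy' ⟨Z, hZ⟩).2)
      · rintro ⟨Z1, hZ1⟩ ⟨Z2, hZ2⟩
        obtain ⟨Z3, hZ3, hsub⟩ := hdir Z1 hZ1 Z2 hZ2
        refine ⟨⟨Z3, hZ3⟩, ?_, ?_⟩
        · exact fun z hz => ⟨hz.1, tset_mono R Vn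
            (update_mono Vp p (fun w hw => (hsub hw).1)) a hz.2⟩
        · exact fun z hz => ⟨hz.1, tset_mono R Vn
            (update_mono Vp p (fun w hw => (hsub hw).2)) a hz.2⟩
      · rintro ⟨Z, hZ⟩
        obtain ⟨y, hyx, hya⟩ := hx Z hZ
        exact ⟨y, hyx, hya⟩
      · exact fun Z => IsCompact.of_isClosed_subset (pred_compact hM x)
          ((pred_closed hM x).inter (hclosed Z)) Set.inter_subset_left
      · exact fun Z => (pred_closed hM x).inter (hclosed Z)

/-- Extraction lemma: if the inequality holds at the saturated set `C`, it holds at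
some `DK`-approximant of `C`. -/
lemma extract [DecidableEq P] (hM : IsGenModal K R) (Vp : P → Set X) (Vn : N → Set X)
    (hVp : ∀ q, SatK K (Vp q)) (hVn : ∀ n, ∃ x : X, Vn n = {x}) (p : P)
    (h0 : (∅ : Set X) ∈ K)
    (C : Set X) (hC : SatK K C) (a : Form P N) (W : Set X) (hW : W ∈ DK K)
    (h : tset R (Function.update Vp p C) Vn a ⊆ W) :
    ∃ Z ∈ DK K, C ⊆ Z ∧ tset R (Function.update Vp p Z) Vn a ⊆ W := by
  have hK := hM.toIsGenStone
  set F : Set (Set X) := {Z | Z ∈ DK K ∧ C ⊆ Z} with hFdef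
  have hFsub : F ⊆ DK K := fun Z hZ => hZ.1
  have hFne : F.Nonempty := ⟨Set.univ, DK_univ hK h0, Set.subset_univ C⟩
  have hdir : DirDown F := by
    rintro Z1 ⟨hZ1, hCZ1⟩ Z2 ⟨hZ2, hCZ2⟩
    exact ⟨Z1 ∩ Z2, ⟨DK_inter hK hZ1 hZ2, Set.subset_inter hCZ1 hCZ2⟩, subset_rfl⟩
  have hCF : ⋂₀ F = C := by
    apply Set.Subset.antisymm
    · intro x hx
      by_contra hxC
      obtain ⟨Z, hZ, hCZ, hxZ⟩ := hC x hxC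
      exact hxZ (hx Z ⟨hZ, hCZ⟩)
    · exact fun x hx Z hZ => hZ.2 hx
  by_contra hcon
  push_neg at hcon
  haveI : Nonempty F := ⟨⟨hFne.choose, hFne.choose_spec⟩⟩
  have hclosed : ∀ Z : F, IsClosed (tset R (Function.update Vp p Z.1) Vn a) :=
    fun Z => (tset_satK hM _ Vn (sat_update Vp p hVp (hFsub Z.2)) hVn a).closed hK
  have hne := IsCompact.nonempty_iInter_of_directed_nonempty_isCompact_isClosed
    (fun Z : F => Wᶜ ∩ tset R (Function.update Vp p Z.1) Vn a) ?_ ?_ ?_ ?_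
  · obtain ⟨y, hy⟩ := hne
    have hy' : ∀ Z : F, y ∈ Wᶜ ∩ tset R (Function.update Vp p Z.1) Vn a :=
      Set.mem_iInter.mp hy
    have hyC : y ∈ tset R (Function.update Vp p (⋂₀ F)) Vn a :=
      esakia hM Vp Vn hVp hVn p F hFsub hFne hdir a y (fun Z hZ => (hy' ⟨Z, hZ⟩).2)
    rw [hCF] at hyC
    exact (hy' ⟨hFne.choose, hFne.choose_spec⟩).1 (h hyC)
  · rintro ⟨Z1, hZ1⟩ ⟨Z2, hZ2⟩
    obtain ⟨Z3, hZ3, hsub⟩ := hdir Z1 hZ1 Z2 hZ2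
    refine ⟨⟨Z3, hZ3⟩, ?_, ?_⟩
    · exact fun z hz => ⟨hz.1, tset_mono R Vn
        (update_mono Vp p (fun w hw => (hsub hw).1)) a hz.2⟩
    · exact fun z hz => ⟨hz.1, tset_mono R Vn
        (update_mono Vp p (fun w hw => (hsub hw).2)) a hz.2⟩
  · rintro ⟨Z, hZ⟩
    obtain ⟨y, hya, hyW⟩ := Set.not_subset.mp (hcon Z hZ.1 hZ.2)
    exact ⟨y, hyW, hya⟩
  · exact fun Z => IsCompact.of_isClosed_subset (hK.compact _ hW)
      ((K_closed hK hW).inter (hclosed Z)) Set.inter_subset_left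
  · exact fun Z => (K_closed hK hW).inter (hclosed Z)

lemma DK_iInter_fin (hK : IsGenStone K) (h0 : (∅ : Set X) ∈ K)
    {m : ℕ} (Z : Fin m → Set X) (hZ : ∀ i, Z i ∈ DK K) : (⋂ i, Z i) ∈ DK K := by
  have : ∀ s : Finset (Fin m), (⋂ i ∈ s, Z i) ∈ DK K := by
    intro s
    induction s using Finset.induction_on with
    | empty => simpa using DK_univ hK h0
    | @insert j s hj ih =>
        rw [Finset.set_biInter_insert]
        exact DK_inter hK (hZ j) ih
  have h := this Finset.univ
  have he : (⋂ i ∈ (Finset.univ : Finset (Fin m)), Z i) = ⋂ i, Z i := by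
    ext x; simp
  rwa [he] at h

end AckAux2

/-- Right-handed topological Ackermann lemma. Each inequality `η_i ≤ ι_i` is coded by an
element of `(Form P N × P) ⊕ X`: `Sum.inl (α, q)` codes `α ≤ q` with `q ≠ p`, and
`Sum.inr n` codes `p ≤ {n}ᶜ`. Condition (1): the inequalities hold after substituting the
pure formula `θ` for `p`; condition (2): there is `Z ∈ D_K(X)` containing `V(θ)` such that
the inequalities hold under the `p`-variant valuation `V[p ↦ Z]`. -/
theorem stmt18 {X P N : Type*} [TopologicalSpace X] [DecidableEq P]
    {K : Set (Set X)} {R : X → X → Prop} (hX : IsGenModal K R)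
    (p : P) (θ : Form P N) (hθ : NoProp θ)
    (m : ℕ) (ineq : Fin m → (Form P N × P) ⊕ X)
    (hq : ∀ (i : Fin m) (a : Form P N) (q : P), ineq i = Sum.inl (a, q) → q ≠ p)
    (Vp : P → Set X) (Vn : N → Set X)
    (hVp : ∀ q : P, Vp q ∈ DK K) (hVn : ∀ n, ∃ x : X, Vn n = {x}) :
    (∀ i : Fin m, match ineq i with
      | Sum.inl (a, q) => tset R Vp Vn (subst p θ a) ⊆ Vp q
      | Sum.inr n => tset R Vp Vn θ ⊆ ({n}ᶜ : Set X)) ↔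
    (∃ Z ∈ DK K, tset R Vp Vn θ ⊆ Z ∧
      ∀ i : Fin m, match ineq i with
      | Sum.inl (a, q) =>
          tset R (Function.update Vp p Z) Vn a ⊆ Function.update Vp p Z q
      | Sum.inr n => Z ⊆ ({n}ᶜ : Set X)) := by
  have hK := hX.toIsGenStone
  have h0 : (∅ : Set X) ∈ K := K_empty hK (hVp p)
  have hVps : ∀ q, SatK K (Vp q) := fun q => DK_sat (hVp q)
  have hCsat : SatK K (tset R Vp Vn θ) := tset_satK hX Vp Vn hVps hVn θ
  constructor
  · intro h1
    have hchoice : ∀ i : Fin m, ∃ Z, (Z ∈ DK K ∧ tset R Vp Vn θ ⊆ Z) ∧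
        (match ineq i with
          | Sum.inl (a, q) => tset R (Function.update Vp p Z) Vn a ⊆ Vp q
          | Sum.inr n => Z ⊆ ({n}ᶜ : Set X)) := by
      intro i
      have h1i := h1 i
      rcases hi : ineq i with ⟨a, q⟩ | n
      · rw [hi] at h1i
        have h1i' : tset R (Function.update Vp p (tset R Vp Vn θ)) Vn a ⊆ Vp q := by
          rw [← tset_subst]; exact h1i
        obtain ⟨Z, hZ, hCZ, hsub⟩ :=
          extract hX Vp Vn hVps hVn p h0 (tset R Vp Vn θ) hCsat a (Vp q) (hVp q) h1i'
        exact ⟨Z, ⟨hZ, hCZ⟩, hsub⟩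
      · rw [hi] at h1i
        have hn : n ∉ tset R Vp Vn θ := fun h => (h1i h) rfl
        obtain ⟨Z, hZ, hCZ, hnZ⟩ := hCsat n hn
        refine ⟨Z, ⟨hZ, hCZ⟩, ?_⟩
        intro z hz hzn
        exact hnZ (Set.mem_singleton_iff.mp hzn ▸ hz)
    choose Zf hZf hmatch using hchoice
    refine ⟨⋂ i, Zf i, DK_iInter_fin hK h0 Zf (fun i => (hZf i).1),
      Set.subset_iInter (fun i => (hZf i).2), ?_⟩
    intro i
    have hmi := hmatch i
    rcases hi : ineq i with ⟨a, q⟩ | n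
    · rw [hi] at hmi
      have hq' : q ≠ p := hq i a q hi
      show tset R (Function.update Vp p (⋂ j, Zf j)) Vn a ⊆
        Function.update Vp p (⋂ j, Zf j) q
      rw [Function.update_of_ne hq']
      exact subset_trans
        (tset_mono R Vn (update_mono Vp p (Set.iInter_subset Zf i)) a) hmi
    · rw [hi] at hmi
      exact subset_trans (Set.iInter_subset Zf i) hmi
  · rintro ⟨Z, hZ, hCZ, h2⟩ i
    have h2i := h2 i
    rcases hi : ineq i with ⟨a, q⟩ | n
    · rw [hi] at h2i
      show tset R Vp Vn (subst p θ a) ⊆ Vp q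
      rw [tset_subst R Vp Vn p θ a]
      refine subset_trans (tset_mono R Vn (update_mono Vp p hCZ) a) ?_
      have hq' : q ≠ p := hq i a q hi
      have h2i' : tset R (Function.update Vp p Z) Vn a ⊆ Function.update Vp p Z q := h2i
      rwa [Function.update_of_ne hq'] at h2i'
    · rw [hi] at h2i
      exact subset_trans hCZ h2i
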